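/- Let n ≥ 3 be an integer, let G be an {F^(1)_n, F^(2)_n}-free graph, let Q = v_1 v_2 ⋯ v_l be an induced path of G, and let y be a vertex with at least one neighbor on Q such that N_G(y) ∩ V(Q) ⊆ {v_i : n+1 ≤ i ≤ l−n}. Setting i_y = min{i : y v_i ∈ E(G)} and j_y = max{i : y v_i ∈ E(G)}, we have 1 ≤ j_y − i_y ≤ 3. -/

import Mathlib

/-! ## Basic notions for graphs and digraphs

A digraph on a vertex type `V` is given by its arc relation `E : V → V → Prop`.
Simplicity and absence of 2-cycles is expressed by the hypothesis
`∀ u v, E u v → ¬ E v u`.  The underlying graph `G_D` is `SimpleGraph.fromRel E`. -/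

/-- `G` contains an induced copy of the simple graph `H`. -/
def HasInducedCopyG {W V : Type} (H : SimpleGraph W) (G : SimpleGraph V) : Prop :=
  ∃ f : W → V, Function.Injective f ∧ ∀ a b : W, G.Adj (f a) (f b) ↔ H.Adj a b

/-- The digraph `E` contains an induced copy of the digraph `H`. -/
def DigraphHasInducedCopy {W V : Type} (H : W → W → Prop) (E : V → V → Prop) : Prop :=
  ∃ f : W → V, Function.Injective f ∧ ∀ a b : W, E (f a) (f b) ↔ H a b

/-- The star `K_{1,n}` with one center and `n` leaves. -/
def StarG (n : ℕ) : SimpleGraph (Unit ⊕ Fin n) :=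
  SimpleGraph.fromRel (fun a b =>
    match a, b with
    | Sum.inl _, Sum.inr _ => True
    | _, _ => False)

/-- The path `P_n` of order `n`. -/
def PathG (n : ℕ) : SimpleGraph (Fin n) :=
  SimpleGraph.fromRel (fun i j => i.val + 1 = j.val)

/-- The graph `K*_n`: a complete graph on the `x_i` together with pendant edges `x_i y_i`. -/
def KStarG (n : ℕ) : SimpleGraph (Fin n ⊕ Fin n) :=
  SimpleGraph.fromRel (fun a b =>
    match a, b with
    | Sum.inl i, Sum.inl j => i ≠ j
    | Sum.inl i, Sum.inr j => i = j
    | _, _ => False)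

/-- The graph `F^(1)_n` on `{x₁,x₂} ∪ {yᵢ} ∪ {zᵢ}`:
edges `x₁x₂, x₁y₁, x₁z₁` together with the two paths `y₁⋯y_n` and `z₁⋯z_n`. -/
def F1G (n : ℕ) : SimpleGraph (Fin 2 ⊕ Fin n ⊕ Fin n) :=
  SimpleGraph.fromRel (fun a b =>
    match a, b with
    | Sum.inl i, Sum.inl j => i.val = 0 ∧ j.val = 1
    | Sum.inl i, Sum.inr (Sum.inl j) => i.val = 0 ∧ j.val = 0
    | Sum.inl i, Sum.inr (Sum.inr j) => i.val = 0 ∧ j.val = 0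
    | Sum.inr (Sum.inl i), Sum.inr (Sum.inl j) => i.val + 1 = j.val
    | Sum.inr (Sum.inr i), Sum.inr (Sum.inr j) => i.val + 1 = j.val
    | _, _ => False)

/-- The single edge `y₁z₁` (used to build `F^(2)_n` and `F^(4)_n`). -/
def YZEdgeG (n : ℕ) : SimpleGraph (Fin 2 ⊕ Fin n ⊕ Fin n) :=
  SimpleGraph.fromRel (fun a b =>
    match a, b with
    | Sum.inr (Sum.inl i), Sum.inr (Sum.inr j) => i.val = 0 ∧ j.val = 0
    | _, _ => False)

/-- `F^(2)_n = F^(1)_n + y₁z₁`. -/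
def F2G (n : ℕ) : SimpleGraph (Fin 2 ⊕ Fin n ⊕ Fin n) := F1G n ⊔ YZEdgeG n

/-- The graph `F^(3)_n`: edges `x₁y₁, x₁z₁, x₂y₁, x₂z₁` together with the two paths. -/
def F3G (n : ℕ) : SimpleGraph (Fin 2 ⊕ Fin n ⊕ Fin n) :=
  SimpleGraph.fromRel (fun a b =>
    match a, b with
    | Sum.inl _, Sum.inr (Sum.inl j) => j.val = 0
    | Sum.inl _, Sum.inr (Sum.inr j) => j.val = 0
    | Sum.inr (Sum.inl i), Sum.inr (Sum.inl j) => i.val + 1 = j.val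
    | Sum.inr (Sum.inr i), Sum.inr (Sum.inr j) => i.val + 1 = j.val
    | _, _ => False)

/-- `F^(4)_n = F^(3)_n + y₁z₁`. -/
def F4G (n : ℕ) : SimpleGraph (Fin 2 ⊕ Fin n ⊕ Fin n) := F3G n ⊔ YZEdgeG n

/-- The digraph `D^(1)_n` on `{x₁} ∪ {yᵢ} ∪ {zᵢ}` with arcs
`(x₁,y₁), (z₁,x₁), (y₁,z₁)`, `(y_{i+1}, y_i)` and `(z_i, z_{i+1})`. -/
def D1Rel (n : ℕ) : (Unit ⊕ Fin n ⊕ Fin n) → (Unit ⊕ Fin n ⊕ Fin n) → Prop := fun a b =>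
  match a, b with
  | Sum.inl _, Sum.inr (Sum.inl j) => j.val = 0
  | Sum.inr (Sum.inr i), Sum.inl _ => i.val = 0
  | Sum.inr (Sum.inl i), Sum.inr (Sum.inr j) => i.val = 0 ∧ j.val = 0
  | Sum.inr (Sum.inl i), Sum.inr (Sum.inl j) => j.val + 1 = i.val
  | Sum.inr (Sum.inr i), Sum.inr (Sum.inr j) => i.val + 1 = j.val
  | _, _ => False

/-- `D^(2)_n`: obtained from `D^(1)_n` by replacing the arc `(z₁,x₁)` by `(x₁,z₁)`. -/
def D2Rel (n : ℕ) : (Unit ⊕ Fin n ⊕ Fin n) → (Unit ⊕ Fin n ⊕ Fin n) → Prop := fun a b =>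
  match a, b with
  | Sum.inl _, Sum.inr (Sum.inl j) => j.val = 0
  | Sum.inl _, Sum.inr (Sum.inr j) => j.val = 0
  | Sum.inr (Sum.inl i), Sum.inr (Sum.inr j) => i.val = 0 ∧ j.val = 0
  | Sum.inr (Sum.inl i), Sum.inr (Sum.inl j) => j.val + 1 = i.val
  | Sum.inr (Sum.inr i), Sum.inr (Sum.inr j) => i.val + 1 = j.val
  | _, _ => False

/-- `D^(3)_n`: obtained from `D^(1)_n` by replacing the arc `(x₁,y₁)` by `(y₁,x₁)`. -/
def D3Rel (n : ℕ) : (Unit ⊕ Fin n ⊕ Fin n) → (Unit ⊕ Fin n ⊕ Fin n) → Prop := fun a b =>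
  match a, b with
  | Sum.inr (Sum.inl i), Sum.inl _ => i.val = 0
  | Sum.inr (Sum.inr i), Sum.inl _ => i.val = 0
  | Sum.inr (Sum.inl i), Sum.inr (Sum.inr j) => i.val = 0 ∧ j.val = 0
  | Sum.inr (Sum.inl i), Sum.inr (Sum.inl j) => j.val + 1 = i.val
  | Sum.inr (Sum.inr i), Sum.inr (Sum.inr j) => i.val + 1 = j.val
  | _, _ => False

/-- The transitive tournament `T_n`. -/
def TRel (n : ℕ) : Fin n → Fin n → Prop := fun i j => i < j

/-- A (nonempty) directed path in the digraph `E`, recorded as its list of vertices. -/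
def IsDirPathList {V : Type} (E : V → V → Prop) (l : List V) : Prop :=
  l ≠ [] ∧ l.Nodup ∧ l.Chain' E

/-- The path cover number of the subdigraph of `E` induced by `X`:
the minimum number of directed paths of `E[X]` whose vertex sets cover `X`. -/
noncomputable def pcOn {V : Type} (E : V → V → Prop) (X : Set V) : ℕ :=
  sInf {k | ∃ P : Finset (List V), P.card = k ∧
    (∀ l ∈ P, IsDirPathList E l ∧ ∀ v ∈ l, v ∈ X) ∧
    ∀ v ∈ X, ∃ l ∈ P, v ∈ l}

/-- The path partition number of the subdigraph of `E` induced by `X`: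
the minimum number of pairwise vertex-disjoint directed paths of `E[X]`
whose vertex sets partition `X`. -/
noncomputable def ppOn {V : Type} (E : V → V → Prop) (X : Set V) : ℕ :=
  sInf {k | ∃ P : Finset (List V), P.card = k ∧
    (∀ l ∈ P, IsDirPathList E l ∧ ∀ v ∈ l, v ∈ X) ∧
    (∀ v ∈ X, ∃ l ∈ P, v ∈ l) ∧
    ∀ l ∈ P, ∀ l' ∈ P, l ≠ l' → ∀ v ∈ l, v ∉ l'}

/-- A (nonempty) path in the simple graph `G`, recorded as its list of vertices. -/
def IsPathList {V : Type} (G : SimpleGraph V) (l : List V) : Prop :=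
  l ≠ [] ∧ l.Nodup ∧ l.Chain' G.Adj

/-- The path cover number `pc(G)` of a simple graph `G`. -/
noncomputable def pcG {V : Type} (G : SimpleGraph V) : ℕ :=
  sInf {k | ∃ P : Finset (List V), P.card = k ∧
    (∀ l ∈ P, IsPathList G l) ∧ ∀ v : V, ∃ l ∈ P, v ∈ l}

/-- The path partition number `pp(G)` of a simple graph `G`. -/
noncomputable def ppG {V : Type} (G : SimpleGraph V) : ℕ :=
  sInf {k | ∃ P : Finset (List V), P.card = k ∧
    (∀ l ∈ P, IsPathList G l) ∧ (∀ v : V, ∃ l ∈ P, v ∈ l) ∧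
    ∀ l ∈ P, ∀ l' ∈ P, l ≠ l' → ∀ v ∈ l, v ∉ l'}

/-- A directed cycle in the digraph `E`, recorded as its list of vertices. -/
def IsDirCycleList {V : Type} (E : V → V → Prop) (l : List V) : Prop :=
  ∃ h : l ≠ [], 3 ≤ l.length ∧ l.Nodup ∧ l.Chain' E ∧ E (l.getLast h) (l.head h)

/-- A member of a cycle cover/partition: a directed cycle, or a weakly connected
subdigraph of order at most two. -/
def IsCyclePartMember {V : Type} (E : V → V → Prop) (l : List V) : Prop :=
  IsDirCycleList E l ∨
    (l ≠ [] ∧ l.length ≤ 2 ∧ l.Nodup ∧ l.Chain' (fun a b => E a b ∨ E b a))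

/-- The cycle partition number `cp(D)` of the digraph `E`. -/
noncomputable def cpNum {V : Type} (E : V → V → Prop) : ℕ :=
  sInf {k | ∃ P : Finset (List V), P.card = k ∧
    (∀ l ∈ P, IsCyclePartMember E l) ∧
    (∀ v : V, ∃ l ∈ P, v ∈ l) ∧
    ∀ l ∈ P, ∀ l' ∈ P, l ≠ l' → ∀ v ∈ l, v ∉ l'}

/-- `v : Fin m → V` enumerates an induced path of the simple graph `G`. -/
def IsInducedPathEmb {V : Type} (G : SimpleGraph V) {m : ℕ} (v : Fin m → V) : Prop :=
  Function.Injective v ∧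
    ∀ i j : Fin m, G.Adj (v i) (v j) ↔ (i.val + 1 = j.val ∨ j.val + 1 = i.val)

/-- `w : Fin m → V` enumerates an induced pseudo-path of the digraph `E`:
the induced subdigraph on its image has a path as underlying graph. -/
def IsInducedPsPath {V : Type} (E : V → V → Prop) {m : ℕ} (w : Fin m → V) : Prop :=
  Function.Injective w ∧
    ∀ i j : Fin m, (E (w i) (w j) ∨ E (w j) (w i)) ↔ (i.val + 1 = j.val ∨ j.val + 1 = i.val)

/-- `r(P)` for a pseudo-path enumerated by `w`: the number of (internal) vertices
having out-degree 2 or in-degree 2 in the pseudo-path. -/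
noncomputable def turnCount {V : Type} (E : V → V → Prop) {m : ℕ} (w : Fin m → V) : ℕ :=
  Set.ncard {i : Fin m | ∃ j k : Fin m, j.val + 1 = i.val ∧ i.val + 1 = k.val ∧
    ((E (w i) (w j) ∧ E (w i) (w k)) ∨ (E (w j) (w i) ∧ E (w k) (w i)))}

/-- Condition (D1): the underlying graph of `E` is `{K*_n, K_{1,n}, F^(1)_n, F^(2)_n}`-free. -/
def CondD1 {V : Type} (n : ℕ) (E : V → V → Prop) : Prop :=
  ¬ HasInducedCopyG (KStarG n) (SimpleGraph.fromRel E) ∧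
  ¬ HasInducedCopyG (StarG n) (SimpleGraph.fromRel E) ∧
  ¬ HasInducedCopyG (F1G n) (SimpleGraph.fromRel E) ∧
  ¬ HasInducedCopyG (F2G n) (SimpleGraph.fromRel E)

/-- Condition (D'1): the underlying graph of `E` is
`{K*_n, K_{1,n}, F^(1)_n, F^(2)_n, F^(3)_n, F^(4)_n}`-free. -/
def CondD1' {V : Type} (n : ℕ) (E : V → V → Prop) : Prop :=
  CondD1 n E ∧
  ¬ HasInducedCopyG (F3G n) (SimpleGraph.fromRel E) ∧
  ¬ HasInducedCopyG (F4G n) (SimpleGraph.fromRel E)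

/-- Condition (D2): `E` is `{D^(1)_n, D^(2)_n, D^(3)_n}`-free. -/
def CondD2 {V : Type} (n : ℕ) (E : V → V → Prop) : Prop :=
  ¬ DigraphHasInducedCopy (D1Rel n) E ∧
  ¬ DigraphHasInducedCopy (D2Rel n) E ∧
  ¬ DigraphHasInducedCopy (D3Rel n) E

/-- Condition (D3): `r(P) ≤ n` for every induced pseudo-path `P` of `E`. -/
def CondD3 {V : Type} (n : ℕ) (E : V → V → Prop) : Prop :=
  ∀ (m : ℕ) (w : Fin m → V), IsInducedPsPath E w → turnCount E w ≤ n

/-- The Ramsey number `R(a, b)`: the least `R` such that every graph on at least `R`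
vertices contains a clique of size `a` or an independent set of size `b`. -/
noncomputable def ramseyNumber (a b : ℕ) : ℕ :=
  sInf {R | ∀ m : ℕ, R ≤ m → ∀ G : SimpleGraph (Fin m),
    (∃ s : Finset (Fin m), G.IsNClique a s) ∨ (∃ s : Finset (Fin m), Gᶜ.IsNClique b s)}

/-- The independence number of the subgraph of `G` induced by `X`. -/
noncomputable def indepNumOn {V : Type} (G : SimpleGraph V) (X : Set V) : ℕ :=
  sSup {k | ∃ s : Finset V, ↑s ⊆ X ∧ s.card = k ∧ ∀ a ∈ s, ∀ b ∈ s, a ≠ b → ¬ G.Adj a b}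

/-- The independence number `α(G)`. -/
noncomputable def indepNum {V : Type} (G : SimpleGraph V) : ℕ := indepNumOn G Set.univ

/-- The neighborhood `N_G(X)` of a set of vertices. -/
def nbhd {V : Type} (G : SimpleGraph V) (X : Set V) : Set V :=
  {v | v ∉ X ∧ ∃ x ∈ X, G.Adj v x}
lemma f1_copy {V : Type} (G : SimpleGraph V) (n : ℕ)
    (x1 x2 : V) (p q : Fin n → V)
    (hx12 : x1 ≠ x2) (hx1p : ∀ k, x1 ≠ p k) (hx1q : ∀ k, x1 ≠ q k)
    (hx2p : ∀ k, x2 ≠ p k) (hx2q : ∀ k, x2 ≠ q k)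
    (hpinj : Function.Injective p) (hqinj : Function.Injective q)
    (hpq : ∀ k k', p k ≠ q k')
    (a12 : G.Adj x1 x2)
    (a1p : ∀ k : Fin n, G.Adj x1 (p k) ↔ k.val = 0)
    (a1q : ∀ k : Fin n, G.Adj x1 (q k) ↔ k.val = 0)
    (a2p : ∀ k, ¬ G.Adj x2 (p k)) (a2q : ∀ k, ¬ G.Adj x2 (q k))
    (app : ∀ k k' : Fin n, G.Adj (p k) (p k') ↔ (k.val + 1 = k'.val ∨ k'.val + 1 = k.val))
    (aqq : ∀ k k' : Fin n, G.Adj (q k) (q k') ↔ (k.val + 1 = k'.val ∨ k'.val + 1 = k.val))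
    (apq : ∀ k k', ¬ G.Adj (p k) (q k')) :
    HasInducedCopyG (F1G n) G := by
  refine ⟨Sum.elim (fun i : Fin 2 => if i.val = 0 then x1 else x2) (Sum.elim p q), ?_, ?_⟩
  · rintro (i | k | k) (i' | k' | k') h <;>
      simp only [Sum.elim_inl, Sum.elim_inr] at h
    · split_ifs at h with h1 h2 h2
      · exact congrArg Sum.inl (Fin.ext (by omega))
      · exact absurd h hx12
      · exact absurd h.symm hx12
      · exact congrArg Sum.inl (Fin.ext (by omega))
    · split_ifs at h
      · exact absurd h (hx1p k')
      · exact absurd h (hx2p k')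
    · split_ifs at h
      · exact absurd h (hx1q k')
      · exact absurd h (hx2q k')
    · split_ifs at h
      · exact absurd h.symm (hx1p k)
      · exact absurd h.symm (hx2p k)
    · exact congrArg (Sum.inr ∘ Sum.inl) (hpinj h)
    · exact absurd h (hpq k k')
    · split_ifs at h
      · exact absurd h.symm (hx1q k)
      · exact absurd h.symm (hx2q k)
    · exact absurd h.symm (hpq k' k)
    · exact congrArg (Sum.inr ∘ Sum.inr) (hqinj h)
  · rintro (i | k | k) (i' | k' | k') <;>
      simp only [Sum.elim_inl, Sum.elim_inr, F1G, SimpleGraph.fromRel_adj, ne_eq,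
        Sum.inl.injEq, Sum.inr.injEq, reduceCtorEq, not_false_eq_true, true_and, false_and,
        and_false, or_false, false_or, or_self, iff_false]
    · fin_cases i <;> fin_cases i' <;>
        simp [a12, a12.symm, G.irrefl, hx12]
    · fin_cases i <;> simp [a1p, a2p k']
    · fin_cases i <;> simp [a1q, a2q k']
    · fin_cases i' <;>
        simp [fun k => (a1p k).symm, a2p k, SimpleGraph.adj_comm _ (p k) x1,
          SimpleGraph.adj_comm _ (p k) x2]
    · rw [app]
      constructor
      · intro h; exact ⟨fun hk => by subst hk; omega, h⟩
      · rintro ⟨h1, h2⟩; exact h2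
    · simp [apq k k']
    · fin_cases i' <;>
        simp [SimpleGraph.adj_comm _ (q k) x1, SimpleGraph.adj_comm _ (q k) x2, a1q, a2q k]
    · simp [SimpleGraph.adj_comm _ (q k) (p k'), apq k' k]
    · rw [aqq]
      constructor
      · intro h; exact ⟨fun hk => by subst hk; omega, h⟩
      · rintro ⟨h1, h2⟩; exact h2

lemma f2_copy {V : Type} (G : SimpleGraph V) (n : ℕ)
    (x1 x2 : V) (p q : Fin n → V)
    (hx12 : x1 ≠ x2) (hx1p : ∀ k, x1 ≠ p k) (hx1q : ∀ k, x1 ≠ q k)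
    (hx2p : ∀ k, x2 ≠ p k) (hx2q : ∀ k, x2 ≠ q k)
    (hpinj : Function.Injective p) (hqinj : Function.Injective q)
    (hpq : ∀ k k', p k ≠ q k')
    (a12 : G.Adj x1 x2)
    (a1p : ∀ k : Fin n, G.Adj x1 (p k) ↔ k.val = 0)
    (a1q : ∀ k : Fin n, G.Adj x1 (q k) ↔ k.val = 0)
    (a2p : ∀ k, ¬ G.Adj x2 (p k)) (a2q : ∀ k, ¬ G.Adj x2 (q k))
    (app : ∀ k k' : Fin n, G.Adj (p k) (p k') ↔ (k.val + 1 = k'.val ∨ k'.val + 1 = k.val))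
    (aqq : ∀ k k' : Fin n, G.Adj (q k) (q k') ↔ (k.val + 1 = k'.val ∨ k'.val + 1 = k.val))
    (apq : ∀ k k' : Fin n, G.Adj (p k) (q k') ↔ (k.val = 0 ∧ k'.val = 0)) :
    HasInducedCopyG (F2G n) G := by
  refine ⟨Sum.elim (fun i : Fin 2 => if i.val = 0 then x1 else x2) (Sum.elim p q), ?_, ?_⟩
  · rintro (i | k | k) (i' | k' | k') h <;>
      simp only [Sum.elim_inl, Sum.elim_inr] at h
    · split_ifs at h with h1 h2 h2
      · exact congrArg Sum.inl (Fin.ext (by omega))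
      · exact absurd h hx12
      · exact absurd h.symm hx12
      · exact congrArg Sum.inl (Fin.ext (by omega))
    · split_ifs at h
      · exact absurd h (hx1p k')
      · exact absurd h (hx2p k')
    · split_ifs at h
      · exact absurd h (hx1q k')
      · exact absurd h (hx2q k')
    · split_ifs at h
      · exact absurd h.symm (hx1p k)
      · exact absurd h.symm (hx2p k)
    · exact congrArg (Sum.inr ∘ Sum.inl) (hpinj h)
    · exact absurd h (hpq k k')
    · split_ifs at h
      · exact absurd h.symm (hx1q k)
      · exact absurd h.symm (hx2q k)
    · exact absurd h.symm (hpq k' k)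
    · exact congrArg (Sum.inr ∘ Sum.inr) (hqinj h)
  · rintro (i | k | k) (i' | k' | k') <;>
      simp only [Sum.elim_inl, Sum.elim_inr, F2G, F1G, YZEdgeG, SimpleGraph.sup_adj,
        SimpleGraph.fromRel_adj, ne_eq,
        Sum.inl.injEq, Sum.inr.injEq, reduceCtorEq, not_false_eq_true, true_and, false_and,
        and_false, or_false, false_or, or_self, iff_false]
    · fin_cases i <;> fin_cases i' <;>
        simp [a12, a12.symm, G.irrefl, hx12]
    · fin_cases i <;> simp [a1p, a2p k']
    · fin_cases i <;> simp [a1q, a2q k']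
    · fin_cases i' <;>
        simp [fun k => (a1p k).symm, a2p k, SimpleGraph.adj_comm _ (p k) x1,
          SimpleGraph.adj_comm _ (p k) x2]
    · rw [app]
      constructor
      · intro h; exact ⟨fun hk => by subst hk; omega, h⟩
      · rintro ⟨h1, h2⟩; exact h2
    · rw [apq]
    · fin_cases i' <;>
        simp [SimpleGraph.adj_comm _ (q k) x1, SimpleGraph.adj_comm _ (q k) x2, a1q, a2q k]
    · rw [SimpleGraph.adj_comm, apq]
    · rw [aqq]
      constructor
      · intro h; exact ⟨fun hk => by subst hk; omega, h⟩
      · rintro ⟨h1, h2⟩; exact h2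


/-- Let `n ≥ 3`, `G` be `{F^(1)_n, F^(2)_n}`-free, `Q = v₁⋯v_l` an
induced path, and `y ∉ V(Q)` with a neighbor on `Q`, all of whose neighbors on `Q` lie
among `v_{n+1}, …, v_{l−n}`.  If `i_y`, `j_y` are the least and largest indices of
neighbors of `y` on `Q`, then `1 ≤ j_y − i_y ≤ 3`.
(Indices are shifted to be 0-based: paper index `i` corresponds to `i - 1` here.) -/
theorem neighbor_indices_spread (n : ℕ) (hn : 3 ≤ n) (V : Type) (G : SimpleGraph V)
    (hF1 : ¬ HasInducedCopyG (F1G n) G) (hF2 : ¬ HasInducedCopyG (F2G n) G)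
    (l : ℕ) (v : Fin l → V) (hQ : IsInducedPathEmb G v)
    (y : V) (hy : y ∉ Set.range v)
    (hmid : ∀ i : Fin l, G.Adj y (v i) → n ≤ i.val ∧ i.val + n + 1 ≤ l)
    (iy jy : Fin l) (hiy : G.Adj y (v iy)) (hjy : G.Adj y (v jy))
    (hmin : ∀ i : Fin l, G.Adj y (v i) → iy ≤ i)
    (hmax : ∀ i : Fin l, G.Adj y (v i) → i ≤ jy) :
    iy.val + 1 ≤ jy.val ∧ jy.val ≤ iy.val + 3 := by
  obtain ⟨hvinj, hvadj⟩ := hQ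
  have hadj : ∀ (a b : ℕ) (ha : a < l) (hb : b < l),
      G.Adj (v ⟨a, ha⟩) (v ⟨b, hb⟩) ↔ (a + 1 = b ∨ b + 1 = a) := fun a b ha hb =>
    hvadj ⟨a, ha⟩ ⟨b, hb⟩
  have hne : ∀ (a b : ℕ) (ha : a < l) (hb : b < l), a ≠ b → v ⟨a, ha⟩ ≠ v ⟨b, hb⟩ := by
    intro a b ha hb hab hv
    exact hab (congrArg Fin.val (hvinj hv))
  have hyne : ∀ (a : ℕ) (ha : a < l), y ≠ v ⟨a, ha⟩ := fun a ha h => hy ⟨⟨a, ha⟩, h.symm⟩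
  have hyi' : ∀ (a : ℕ) (ha : a < l), a ≤ iy.val → (G.Adj y (v ⟨a, ha⟩) ↔ a = iy.val) := by
    intro a ha hle
    constructor
    · intro had
      have h3 : iy.val ≤ a := hmin ⟨a, ha⟩ had
      omega
    · intro h
      subst h
      exact hiy
  have hyj' : ∀ (a : ℕ) (ha : a < l), jy.val ≤ a → (G.Adj y (v ⟨a, ha⟩) ↔ a = jy.val) := by
    intro a ha hle
    constructor
    · intro had
      have h3 : a ≤ jy.val := hmax ⟨a, ha⟩ had
      omega
    · intro h
      subst h
      exact hjy
  obtain ⟨hni, hil⟩ := hmid iy hiy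
  obtain ⟨hnj, hjl⟩ := hmid jy hjy
  have hij : iy.val ≤ jy.val := hmin jy hjy
  have goal1 : iy.val + 1 ≤ jy.val := by
    by_contra hcon
    have heq : jy.val = iy.val := by omega
    refine hF1 (f1_copy G n (v ⟨iy.val, iy.isLt⟩) y
      (fun k => v ⟨iy.val - 1 - k.val, by omega⟩)
      (fun k => v ⟨iy.val + 1 + k.val, by have := k.isLt; omega⟩)
      (hyne _ _).symm
      (fun k => hne _ _ _ _ (by have := k.isLt; omega))
      (fun k => hne _ _ _ _ (by have := k.isLt; omega))
      (fun k => hyne _ _) (fun k => hyne _ _)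
      (fun k k' h => Fin.ext (by
        have h2 : iy.val - 1 - k.val = iy.val - 1 - k'.val := congrArg Fin.val (hvinj h)
        have := k.isLt; have := k'.isLt; omega))
      (fun k k' h => Fin.ext (by
        have h2 : iy.val + 1 + k.val = iy.val + 1 + k'.val := congrArg Fin.val (hvinj h)
        omega))
      (fun k k' => hne _ _ _ _ (by have := k.isLt; omega))
      hiy.symm
      (fun k => by rw [hadj]; have := k.isLt; omega)
      (fun k => by rw [hadj]; have := k.isLt; omega)
      (fun k => by
        rw [hyi' _ _ (by have := k.isLt; omega)]
        have := k.isLt; omega)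
      (fun k => by
        rw [hyj' _ _ (by omega)]
        omega)
      (fun k k' => by rw [hadj]; have := k.isLt; have := k'.isLt; omega)
      (fun k k' => by rw [hadj]; have := k.isLt; have := k'.isLt; omega)
      (fun k k' => by rw [hadj]; have := k.isLt; have := k'.isLt; omega))
  refine ⟨goal1, ?_⟩
  by_contra hcon
  push_neg at hcon
  by_cases hmidn : ∃ m : Fin l, iy.val + 2 ≤ m.val ∧ m.val + 2 ≤ jy.val ∧ G.Adj y (v m)
  · obtain ⟨m, hm1, hm2, hm3⟩ := hmidn
    refine hF1 (f1_copy G n y (v ⟨m.val, m.isLt⟩)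
      (fun k => v ⟨iy.val - k.val, by omega⟩)
      (fun k => v ⟨jy.val + k.val, by have := k.isLt; omega⟩)
      (hyne _ _)
      (fun k => hyne _ _) (fun k => hyne _ _)
      (fun k => hne _ _ _ _ (by have := k.isLt; omega))
      (fun k => hne _ _ _ _ (by have := k.isLt; omega))
      (fun k k' h => Fin.ext (by
        have h2 : iy.val - k.val = iy.val - k'.val := congrArg Fin.val (hvinj h)
        have := k.isLt; have := k'.isLt; omega))
      (fun k k' h => Fin.ext (by
        have h2 : jy.val + k.val = jy.val + k'.val := congrArg Fin.val (hvinj h)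
        omega))
      (fun k k' => hne _ _ _ _ (by have := k.isLt; omega))
      hm3
      (fun k => by rw [hyi' _ _ (by omega)]; have := k.isLt; omega)
      (fun k => by rw [hyj' _ _ (by omega)]; omega)
      (fun k => by rw [hadj]; have := k.isLt; omega)
      (fun k => by rw [hadj]; have := k.isLt; omega)
      (fun k k' => by rw [hadj]; have := k.isLt; have := k'.isLt; omega)
      (fun k k' => by rw [hadj]; have := k.isLt; have := k'.isLt; omega)
      (fun k k' => by rw [hadj]; have := k.isLt; have := k'.isLt; omega))
  · push_neg at hmidn
    have h2 : ¬ G.Adj y (v ⟨iy.val + 2, by omega⟩) :=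
      hmidn ⟨iy.val + 2, by omega⟩ (Nat.le_refl _) (by show iy.val + 2 + 2 ≤ jy.val; omega)
    by_cases h1 : G.Adj y (v ⟨iy.val + 1, by omega⟩)
    · -- F2 copy: x1 = v_{i+1}, x2 = v_{i+2}, p = (y, v_j, v_{j+1}, ...), q = (v_i, v_{i-1}, ...)
      refine hF2 (f2_copy G n (v ⟨iy.val + 1, by omega⟩) (v ⟨iy.val + 2, by omega⟩)
        (fun k => if hk : k.val = 0 then y else
          v ⟨jy.val + k.val - 1, by have := k.isLt; omega⟩)
        (fun k => v ⟨iy.val - k.val, by omega⟩)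
        (hne _ _ _ _ (by omega))
        (fun k => by
          by_cases hk : k.val = 0
          · rw [dif_pos hk]; exact (hyne _ _).symm
          · rw [dif_neg hk]; exact hne _ _ _ _ (by have := k.isLt; omega))
        (fun k => hne _ _ _ _ (by have := k.isLt; omega))
        (fun k => by
          by_cases hk : k.val = 0
          · rw [dif_pos hk]; exact (hyne _ _).symm
          · rw [dif_neg hk]; exact hne _ _ _ _ (by have := k.isLt; omega))
        (fun k => hne _ _ _ _ (by have := k.isLt; omega))
        (fun k k' h => by
          dsimp only at h
          by_cases hk : k.val = 0 <;> by_cases hk' : k'.val = 0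
          · exact Fin.ext (by omega)
          · rw [dif_pos hk, dif_neg hk'] at h; exact absurd h (hyne _ _)
          · rw [dif_neg hk, dif_pos hk'] at h; exact absurd h.symm (hyne _ _)
          · rw [dif_neg hk, dif_neg hk'] at h
            exact Fin.ext (by
              have h2 : jy.val + k.val - 1 = jy.val + k'.val - 1 := congrArg Fin.val (hvinj h)
              omega))
        (fun k k' h => Fin.ext (by
          have h2 : iy.val - k.val = iy.val - k'.val := congrArg Fin.val (hvinj h)
          have := k.isLt; have := k'.isLt; omega))
        (fun k k' => by
          by_cases hk : k.val = 0
          · rw [dif_pos hk]; exact hyne _ _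
          · rw [dif_neg hk]; exact hne _ _ _ _ (by omega))
        (by rw [hadj]; omega)
        (fun k => by
          by_cases hk : k.val = 0
          · rw [dif_pos hk]; simp [SimpleGraph.adj_comm _ _ y, h1, hk]
          · rw [dif_neg hk, hadj]; omega)
        (fun k => by rw [hadj]; have := k.isLt; omega)
        (fun k => by
          by_cases hk : k.val = 0
          · rw [dif_pos hk]; rw [SimpleGraph.adj_comm]; exact h2
          · rw [dif_neg hk, hadj]; intro h; omega)
        (fun k => by rw [hadj]; intro h; have := k.isLt; omega)
        (fun k k' => by
          by_cases hk : k.val = 0 <;> by_cases hk' : k'.val = 0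
          · rw [dif_pos hk, dif_pos hk']; simp [hk, hk']
          · rw [dif_pos hk, dif_neg hk', hyj' _ _ (by have := k'.isLt; omega)]
            have := k'.isLt; omega
          · rw [dif_neg hk, dif_pos hk', SimpleGraph.adj_comm,
              hyj' _ _ (by have := k.isLt; omega)]
            have := k.isLt; omega
          · rw [dif_neg hk, dif_neg hk', hadj]; omega)
        (fun k k' => by rw [hadj]; have := k.isLt; have := k'.isLt; omega)
        (fun k k' => by
          by_cases hk : k.val = 0
          · rw [dif_pos hk, hyi' _ _ (by omega)]; have := k'.isLt; omega
          · rw [dif_neg hk, hadj]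
            constructor
            · intro h; omega
            · intro h; omega))
    · -- F1 copy: x1 = v_i, x2 = v_{i+1}, p = (y, v_j, v_{j+1}, ...), q = (v_{i-1}, ...)
      refine hF1 (f1_copy G n (v ⟨iy.val, iy.isLt⟩) (v ⟨iy.val + 1, by omega⟩)
        (fun k => if hk : k.val = 0 then y else
          v ⟨jy.val + k.val - 1, by have := k.isLt; omega⟩)
        (fun k => v ⟨iy.val - 1 - k.val, by omega⟩)
        (hne _ _ _ _ (by omega))
        (fun k => by
          by_cases hk : k.val = 0
          · rw [dif_pos hk]; exact (hyne _ _).symm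
          · rw [dif_neg hk]; exact hne _ _ _ _ (by have := k.isLt; omega))
        (fun k => hne _ _ _ _ (by have := k.isLt; omega))
        (fun k => by
          by_cases hk : k.val = 0
          · rw [dif_pos hk]; exact (hyne _ _).symm
          · rw [dif_neg hk]; exact hne _ _ _ _ (by have := k.isLt; omega))
        (fun k => hne _ _ _ _ (by have := k.isLt; omega))
        (fun k k' h => by
          dsimp only at h
          by_cases hk : k.val = 0 <;> by_cases hk' : k'.val = 0
          · exact Fin.ext (by omega)
          · rw [dif_pos hk, dif_neg hk'] at h; exact absurd h (hyne _ _)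
          · rw [dif_neg hk, dif_pos hk'] at h; exact absurd h.symm (hyne _ _)
          · rw [dif_neg hk, dif_neg hk'] at h
            exact Fin.ext (by
              have h2 : jy.val + k.val - 1 = jy.val + k'.val - 1 := congrArg Fin.val (hvinj h)
              omega))
        (fun k k' h => Fin.ext (by
          have h2 : iy.val - 1 - k.val = iy.val - 1 - k'.val := congrArg Fin.val (hvinj h)
          have := k.isLt; have := k'.isLt; omega))
        (fun k k' => by
          by_cases hk : k.val = 0
          · rw [dif_pos hk]; exact hyne _ _
          · rw [dif_neg hk]; exact hne _ _ _ _ (by have := k'.isLt; omega))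
        (by rw [hadj]; omega)
        (fun k => by
          by_cases hk : k.val = 0
          · rw [dif_pos hk]; simp [SimpleGraph.adj_comm _ _ y, hiy, hk]
          · rw [dif_neg hk, hadj]; omega)
        (fun k => by rw [hadj]; have := k.isLt; omega)
        (fun k => by
          by_cases hk : k.val = 0
          · rw [dif_pos hk]; rw [SimpleGraph.adj_comm]; exact h1
          · rw [dif_neg hk, hadj]; intro h; omega)
        (fun k => by rw [hadj]; intro h; have := k.isLt; omega)
        (fun k k' => by
          by_cases hk : k.val = 0 <;> by_cases hk' : k'.val = 0
          · rw [dif_pos hk, dif_pos hk']; simp [hk, hk']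
          · rw [dif_pos hk, dif_neg hk', hyj' _ _ (by have := k'.isLt; omega)]
            have := k'.isLt; omega
          · rw [dif_neg hk, dif_pos hk', SimpleGraph.adj_comm,
              hyj' _ _ (by have := k.isLt; omega)]
            have := k.isLt; omega
          · rw [dif_neg hk, dif_neg hk', hadj]; omega)
        (fun k k' => by rw [hadj]; have := k.isLt; have := k'.isLt; omega)
        (fun k k' => by
          by_cases hk : k.val = 0
          · rw [dif_pos hk]
            exact fun h => absurd h (by
              rw [hyi' _ _ (by omega)]; have := k'.isLt; omega)
          · rw [dif_neg hk, hadj]; intro h; omega))
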